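/- Let (Ω, 𝓕, ℙ) be a probability space, n a natural number, p ≥ 1 a real number, and a : Fin n → ℝ a family of nonnegative real numbers (the ages of n transactions). Let S : Fin n → Ω → ℝ be nonnegative random variables (the service times attached to the n scheduling positions) such that each (a(τ(i)) + ∑_{j ≤ i} S(j))^p is integrable for every permutation τ. Let σ be a permutation of Fin n such that a ∘ σ is antitone (eldest transaction scheduled first). Then for every permutation τ of Fin n, 𝔼[∑ᵢ (a(σ(i)) + ∑_{j ≤ i} S(j))^p] ≤ 𝔼[∑ᵢ (a(τ(i)) + ∑_{j ≤ i} S(j))^p]. -/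

import Mathlib

open MeasureTheory

lemma exchange_pow (p : ℝ) (hp : 1 ≤ p) {x y s t : ℝ} (hx : 0 ≤ x) (hxy : x ≤ y)
    (hs : 0 ≤ s) (hst : s ≤ t) :
    (y + s) ^ p + (x + t) ^ p ≤ (x + s) ^ p + (y + t) ^ p := by
  have hderiv : ∀ c : ℝ, ∀ u : ℝ, HasDerivAt (fun u => (u + c) ^ p)
      (1 * p * (u + c) ^ (p - 1)) u := by
    intro c u
    exact (((hasDerivAt_id u).add_const c).rpow_const (Or.inr hp))
  have hg : ∀ u : ℝ, HasDerivAt (fun u => (u + t) ^ p - (u + s) ^ p)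
      (1 * p * (u + t) ^ (p - 1) - 1 * p * (u + s) ^ (p - 1)) u :=
    fun u => (hderiv t u).sub (hderiv s u)
  have hmono : MonotoneOn (fun u : ℝ => (u + t) ^ p - (u + s) ^ p) (Set.Ici 0) := by
    apply monotoneOn_of_deriv_nonneg (convex_Ici 0)
    · exact (Differentiable.continuous (fun u => (hg u).differentiableAt)).continuousOn
    · exact fun u _ => (hg u).differentiableAt.differentiableWithinAt
    · intro u hu
      rw [interior_Ici] at hu
      rw [(hg u).deriv]
      have h1 : (u + s) ^ (p - 1) ≤ (u + t) ^ (p - 1) :=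
        Real.rpow_le_rpow (by linarith [le_of_lt (Set.mem_Ioi.1 hu)]) (by linarith) (by linarith)
      have hp0 : (0:ℝ) ≤ p := by linarith
      nlinarith
  have h := hmono (Set.mem_Ici.2 hx) (Set.mem_Ici.2 (hx.trans hxy)) hxy
  simp only at h
  linarith

lemma key_sum {n : ℕ} : ∀ (α b : Fin n → ℝ), Antitone α → Monotone b →
    (∀ i, 0 ≤ α i) → (∀ i, 0 ≤ b i) →
    ∀ (f : ℝ → ℝ → ℝ),
    (∀ x y s t : ℝ, 0 ≤ x → x ≤ y → 0 ≤ s → s ≤ t → f y s + f x t ≤ f x s + f y t) →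
    ∀ (π : Equiv.Perm (Fin n)),
    ∑ i, f (α i) (b i) ≤ ∑ i, f (α (π i)) (b i) := by
  induction n with
  | zero => intro _ _ _ _ _ _ _ _ _; simp
  | succ n ih =>
    intro α b hα hb hα0 hb0 f hf π
    set j : Fin (n+1) := π⁻¹ 0 with hj
    have hπj : π j = 0 := π.apply_symm_apply 0
    set π' : Equiv.Perm (Fin (n+1)) := π * Equiv.swap 0 j with hπ'
    have hπ'0 : π' 0 = 0 := by
      simp [hπ', Equiv.Perm.mul_apply, Equiv.swap_apply_left, hπj]
    -- step 1 : cost π' ≤ cost π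
    have step1 : ∑ i, f (α (π' i)) (b i) ≤ ∑ i, f (α (π i)) (b i) := by
      rcases eq_or_ne j 0 with h0 | h0
      · apply le_of_eq
        apply Finset.sum_congr rfl
        intro i _
        simp [hπ', ← h0, Equiv.swap_self]
      · have hmem0 : (0 : Fin (n+1)) ∈ Finset.univ := Finset.mem_univ _
        have hmemj : j ∈ Finset.univ.erase (0 : Fin (n+1)) :=
          Finset.mem_erase.2 ⟨h0, Finset.mem_univ _⟩
        rw [← Finset.add_sum_erase _ (fun i => f (α (π' i)) (b i)) hmem0,
          ← Finset.add_sum_erase _ (fun i => f (α (π' i)) (b i)) hmemj,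
          ← Finset.add_sum_erase _ (fun i => f (α (π i)) (b i)) hmem0,
          ← Finset.add_sum_erase _ (fun i => f (α (π i)) (b i)) hmemj]
        have hrest : ∑ i ∈ (Finset.univ.erase 0).erase j, f (α (π' i)) (b i)
            = ∑ i ∈ (Finset.univ.erase 0).erase j, f (α (π i)) (b i) := by
          apply Finset.sum_congr rfl
          intro i hi
          have hij : i ≠ j := (Finset.mem_erase.1 hi).1
          have hi0 : i ≠ 0 := (Finset.mem_erase.1 (Finset.mem_erase.1 hi).2).1
          simp [hπ', Equiv.Perm.mul_apply, Equiv.swap_apply_of_ne_of_ne hi0 hij]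
        rw [hrest]
        have h2 : π' j = π 0 := by
          simp [hπ', Equiv.Perm.mul_apply, Equiv.swap_apply_right]
        rw [hπ'0, h2, hπj]
        have hx : α (π 0) ≤ α 0 := hα (Fin.zero_le _)
        have hs : b 0 ≤ b j := hb (Fin.zero_le _)
        have := hf (α (π 0)) (α 0) (b 0) (b j) (hα0 _) hx (hb0 _) hs
        linarith
    refine le_trans ?_ step1
    -- step 2 : cost id ≤ cost π'
    obtain ⟨q, e, hqe⟩ : ∃ q e, π' = Equiv.Perm.decomposeFin.symm (q, e) :=
      ⟨(Equiv.Perm.decomposeFin π').1, (Equiv.Perm.decomposeFin π').2, by simp⟩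
    have hq : q = 0 := by
      have h := hπ'0
      rw [hqe] at h
      simpa using h
    subst hq
    have hsucc : ∀ x : Fin n, π' x.succ = (e x).succ := by
      intro x
      rw [hqe, Equiv.Perm.decomposeFin_symm_apply_succ]
      simp
    rw [Fin.sum_univ_succ, Fin.sum_univ_succ, hπ'0]
    simp only [hsucc]
    apply add_le_add (le_refl _)
    exact ih (α ∘ Fin.succ) (b ∘ Fin.succ)
      (fun i k h => hα (Fin.succ_le_succ_iff.2 h)) (fun i k h => hb (Fin.succ_le_succ_iff.2 h))
      (fun i => hα0 _) (fun i => hb0 _) f hf e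

/-- Single-queue instance of the VATS optimality theorem (Theorem 1): with
nonnegative ages `a i`, nonnegative random service times `S j` attached to the
scheduling positions, and latencies `a (τ i) + ∑_{j ≤ i} S j` for a schedule
`τ`, the eldest-first schedule `σ` minimizes the expected sum of `p`-th powers
of the latencies over all schedules. -/
theorem vats_optimal {Ω : Type*} [MeasurableSpace Ω] (μ : Measure Ω)
    [IsProbabilityMeasure μ] (n : ℕ) (p : ℝ) (hp : 1 ≤ p)
    (a : Fin n → ℝ) (ha : ∀ i, 0 ≤ a i)
    (S : Fin n → Ω → ℝ) (hS : ∀ j ω, 0 ≤ S j ω)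
    (hint : ∀ (τ : Equiv.Perm (Fin n)) (i : Fin n),
      Integrable (fun ω => (a (τ i) + ∑ j ∈ Finset.Iic i, S j ω) ^ p) μ)
    (σ : Equiv.Perm (Fin n)) (hσ : Antitone (a ∘ σ)) :
    ∀ τ : Equiv.Perm (Fin n),
      (∫ ω, ∑ i, (a (σ i) + ∑ j ∈ Finset.Iic i, S j ω) ^ p ∂μ) ≤
        ∫ ω, ∑ i, (a (τ i) + ∑ j ∈ Finset.Iic i, S j ω) ^ p ∂μ := by
  intro τ
  have hintσ : Integrable (fun ω => ∑ i, (a (σ i) + ∑ j ∈ Finset.Iic i, S j ω) ^ p) μ :=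
    integrable_finset_sum _ (fun i _ => hint σ i)
  have hintτ : Integrable (fun ω => ∑ i, (a (τ i) + ∑ j ∈ Finset.Iic i, S j ω) ^ p) μ :=
    integrable_finset_sum _ (fun i _ => hint τ i)
  apply integral_mono hintσ hintτ
  intro ω
  have hb : Monotone (fun i : Fin n => ∑ j ∈ Finset.Iic i, S j ω) := by
    intro i k hik
    exact Finset.sum_le_sum_of_subset_of_nonneg (Finset.Iic_subset_Iic.2 hik)
      (fun j _ _ => hS j ω)
  have hb0 : ∀ i : Fin n, 0 ≤ ∑ j ∈ Finset.Iic i, S j ω :=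
    fun i => Finset.sum_nonneg (fun j _ => hS j ω)
  have key := key_sum (a ∘ σ) (fun i : Fin n => ∑ j ∈ Finset.Iic i, S j ω)
    hσ hb (fun i => ha _) hb0 (fun x s => (x + s) ^ p)
    (fun x y s t hx hxy hs hst => exchange_pow p hp hx hxy hs hst) (σ⁻¹ * τ)
  simpa [Equiv.Perm.mul_apply, Function.comp] using key
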